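/- Let n ≥ 3 and let P ⊂ ℝⁿ be a polytope with vertex set V and facet set 𝓕. Assume r·B₂ⁿ ⊂ P ⊂ B₂ⁿ for some r with 1/√(n−1) ≤ r ≤ 1. Then min{|𝓕|, |V|} ≥ ( 1 / (2(1−r)) )^{(n−1)/2}. -/

import Mathlib

open Metric Set MeasureTheory
open scoped RealInnerProductSpace ENNReal Pointwise

abbrev Euc (n : ℕ) := EuclideanSpace ℝ (Fin n)

/-- The covering number `N(K, T)`: the minimal number of translates of `T`
needed to cover `K`. -/
noncomputable def coveringNumber {n : ℕ} (K T : Set (Euc n)) : ℕ :=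
  sInf {N : ℕ | ∃ x : Fin N → Euc n, K ⊆ ⋃ i, x i +ᵥ T}

/-- The radial function `ρ_K(θ) = sup {t ≥ 0 : tθ ∈ K}`. -/
noncomputable def radialFn {n : ℕ} (K : Set (Euc n)) (θ : Euc n) : ℝ :=
  sSup {t : ℝ | 0 ≤ t ∧ t • θ ∈ K}

/-- The support function `h_K(u) = sup {⟨x, u⟩ : x ∈ K}`. -/
noncomputable def suppFn {n : ℕ} (K : Set (Euc n)) (u : Euc n) : ℝ :=
  sSup ((fun x => ⟪x, u⟫) '' K)

/-- `F` is a facet of `P ⊆ ℝⁿ`: a nonempty exposed face of dimension `n - 1`. -/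
def IsFacet {n : ℕ} (P F : Set (Euc n)) : Prop :=
  F.Nonempty ∧ IsExposed ℝ P F ∧ Module.finrank ℝ (vectorSpan ℝ F) = n - 1


namespace ManyFaces
variable {n : ℕ}


noncomputable def proj {m : ℕ} (x : Euc (m+1)) : Euc m := WithLp.toLp 2 (fun i : Fin m => x i.castSucc)

lemma proj_dist {m : ℕ} (a b : Euc (m+1)) : dist (proj a) (proj b) ≤ dist a b := by
  rw [EuclideanSpace.dist_eq, EuclideanSpace.dist_eq]
  apply Real.sqrt_le_sqrt
  rw [Fin.sum_univ_castSucc]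
  have : ∀ i : Fin m, dist (proj a i) (proj b i) ^ 2 = dist (a i.castSucc) (b i.castSucc) ^ 2 :=
    fun i => rfl
  simp only [this]
  have := sq_nonneg (dist (a (Fin.last m)) (b (Fin.last m)))
  linarith

lemma exists_lift {m : ℕ} (x : Euc m) (hx : ‖x‖ ≤ 1) :
    ∃ θ : Euc (m+1), ‖θ‖ = 1 ∧ proj θ = x := by
  classical
  refine ⟨WithLp.toLp 2 (fun j : Fin (m+1) => (Fin.lastCases (Real.sqrt (1 - ‖x‖^2)) (fun i => x i) j : ℝ)), ?_, ?_⟩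
  · have hx2 : 0 ≤ 1 - ‖x‖^2 := by nlinarith [norm_nonneg x]
    rw [EuclideanSpace.norm_eq]
    have hsum : ∑ j : Fin (m+1), ‖(Fin.lastCases (Real.sqrt (1 - ‖x‖^2)) (fun i => x i) j : ℝ)‖ ^ 2 = 1 := by
      rw [Fin.sum_univ_castSucc]
      simp only [Fin.lastCases_castSucc, Fin.lastCases_last]
      have h1 : ‖Real.sqrt (1 - ‖x‖^2)‖ ^ 2 = 1 - ‖x‖^2 := by
        rw [Real.norm_eq_abs, sq_abs, Real.sq_sqrt hx2]
      have h2 : ∑ i : Fin m, ‖x i‖ ^ 2 = ‖x‖^2 := by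
        rw [EuclideanSpace.norm_eq, Real.sq_sqrt]
        positivity
      rw [h1, h2]; ring
    exact (congrArg Real.sqrt hsum).trans Real.sqrt_one
  · ext i
    simp [proj]

lemma cap_dist {m : ℕ} {u θ : Euc m} {r : ℝ} (hu : ‖u‖ = 1) (hθ : ‖θ‖ = 1)
    (h : r ≤ ⟪u, θ⟫) : ‖u - θ‖ ≤ Real.sqrt (2 * (1 - r)) := by
  have h1 : ‖u - θ‖^2 = 2 - 2 * ⟪u, θ⟫ := by
    rw [norm_sub_sq_real, hu, hθ]; ring
  have h2 : ‖u - θ‖^2 ≤ 2 * (1 - r) := by rw [h1]; linarith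
  calc ‖u - θ‖ = Real.sqrt (‖u - θ‖^2) := by rw [Real.sqrt_sq (norm_nonneg _)]
  _ ≤ Real.sqrt (2 * (1-r)) := Real.sqrt_le_sqrt h2

lemma counting {m : ℕ} (hm : 1 ≤ m) {ι : Type*} (s : Finset ι) (c : ι → Euc m)
    {ρ : ℝ} (hρ : 0 ≤ ρ)
    (hcov : closedBall (0 : Euc m) 1 ⊆ ⋃ i ∈ s, closedBall (c i) ρ) :
    (ENNReal.ofReal (ρ^2))⁻¹ ^ ((m : ℝ)/2) ≤ (s.card : ℝ≥0∞) := by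
  have hfr : Module.finrank ℝ (Euc m) = m := finrank_euclideanSpace_fin
  have hvol : ∀ x : Euc m, volume (closedBall x ρ)
      = ENNReal.ofReal (ρ ^ m) * volume (closedBall (0 : Euc m) 1) := by
    intro x
    rw [MeasureTheory.Measure.addHaar_closedBall' volume x hρ, hfr]
  have hle : volume (closedBall (0 : Euc m) 1)
      ≤ s.card * (ENNReal.ofReal (ρ ^ m) * volume (closedBall (0 : Euc m) 1)) := by
    calc volume (closedBall (0 : Euc m) 1) ≤ volume (⋃ i ∈ s, closedBall (c i) ρ) :=
          measure_mono hcov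
      _ ≤ ∑ i ∈ s, volume (closedBall (c i) ρ) := measure_biUnion_finset_le s _
      _ = s.card * (ENNReal.ofReal (ρ ^ m) * volume (closedBall (0 : Euc m) 1)) := by
          simp [hvol, Finset.sum_const, nsmul_eq_mul]
  have h0 : volume (closedBall (0 : Euc m) 1) ≠ 0 :=
    (measure_closedBall_pos volume (0 : Euc m) one_pos).ne'
  have htop : volume (closedBall (0 : Euc m) 1) ≠ ⊤ := measure_closedBall_lt_top.ne
  have key : 1 ≤ (s.card : ℝ≥0∞) * ENNReal.ofReal (ρ ^ m) := by
    have h2 : 1 * volume (closedBall (0 : Euc m) 1)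
        ≤ ((s.card : ℝ≥0∞) * ENNReal.ofReal (ρ ^ m)) * volume (closedBall (0 : Euc m) 1) := by
      rw [one_mul, mul_assoc]; exact hle
    exact (ENNReal.mul_le_mul_iff_left h0 htop).1 h2
  have hrw : ENNReal.ofReal (ρ^2) ^ ((m : ℝ)/2) = ENNReal.ofReal (ρ ^ m) := by
    rw [ENNReal.ofReal_rpow_of_nonneg (by positivity) (by positivity)]
    congr 1
    rw [← Real.rpow_natCast ρ 2, ← Real.rpow_mul hρ,
      show ((2:ℕ):ℝ) * ((m:ℝ)/2) = (m:ℝ) by push_cast; ring, Real.rpow_natCast]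
  rw [ENNReal.inv_rpow, hrw]
  by_cases ha : ENNReal.ofReal (ρ ^ m) = 0
  · rw [ha, mul_zero] at key; exact absurd key (by simp)
  · have hat : ENNReal.ofReal (ρ ^ m) ≠ ⊤ := ENNReal.ofReal_ne_top
    rw [ENNReal.inv_le_iff_le_mul (fun _ => ha) (fun h => absurd h hat)]
    rwa [mul_comm] at key



variable {n : ℕ}

lemma inner_isLinearMap (u : Euc n) : IsLinearMap ℝ (fun v : Euc n => ⟪u, v⟫) :=
  ⟨fun a b => inner_add_right u a b, fun c a => real_inner_smul_right u a c⟩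

lemma hull_le_half (V : Finset (Euc n)) (hV : V.Nonempty) (u : Euc n) :
    ∀ x ∈ convexHull ℝ (V : Set (Euc n)), ⟪u, x⟫ ≤ V.sup' hV (fun v => ⟪u, v⟫) := by
  intro x hx
  have : convexHull ℝ (V : Set (Euc n)) ⊆ {z | ⟪u, z⟫ ≤ V.sup' hV (fun v => ⟪u, v⟫)} := by
    apply convexHull_min
    · intro v hv
      exact Finset.le_sup' (fun v => ⟪u, v⟫) hv
    · exact convex_halfSpace_le (inner_isLinearMap u) _
  exact this hx

lemma face_eq (V : Finset (Euc n)) (hV : V.Nonempty) (u : Euc n) :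
    {x ∈ convexHull ℝ (V : Set (Euc n)) |
        ∀ y ∈ convexHull ℝ (V : Set (Euc n)), ⟪u, y⟫ ≤ ⟪u, x⟫}
      = convexHull ℝ ((V.filter (fun v => ⟪u, v⟫ = V.sup' hV (fun v => ⟪u, v⟫))
          : Finset (Euc n)) : Set (Euc n)) := by
  classical
  set M := V.sup' hV (fun v => ⟪u, v⟫) with hM
  set A := V.filter (fun v => ⟪u, v⟫ = M) with hA
  apply Subset.antisymm
  · rintro x ⟨hxP, hxmax⟩
    -- x has maximal inner product, hence ⟪u,x⟫ = M
    obtain ⟨v₀, hv₀V, hv₀⟩ := Finset.exists_mem_eq_sup' hV (fun v => ⟪u, v⟫)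
    have hxM : ⟪u, x⟫ = M := le_antisymm (hull_le_half V hV u x hxP)
      (by rw [hM, hv₀]; exact hxmax v₀ (subset_convexHull ℝ _ (by exact_mod_cast hv₀V)))
    rw [Finset.convexHull_eq] at hxP
    obtain ⟨w, hw0, hw1, hwx⟩ := hxP
    have hxsum : x = ∑ v ∈ V, w v • v := by
      rw [← hwx, Finset.centerMass_eq_of_sum_1 _ _ hw1]; rfl
    have hinner : ∑ v ∈ V, w v * ⟪u, v⟫ = M := by
      rw [← hxM, hxsum, inner_sum]
      exact Finset.sum_congr rfl fun v _ => (real_inner_smul_right u v (w v)).symm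
    have hkey : ∑ v ∈ V, w v * (M - ⟪u, v⟫) = 0 := by
      have : ∑ v ∈ V, w v * (M - ⟪u, v⟫)
          = M * (∑ v ∈ V, w v) - ∑ v ∈ V, w v * ⟪u, v⟫ := by
        rw [Finset.mul_sum, ← Finset.sum_sub_distrib]
        exact Finset.sum_congr rfl fun v _ => by ring
      rw [this, hw1, hinner, mul_one, sub_self]
    have hzero : ∀ v ∈ V, w v * (M - ⟪u, v⟫) = 0 := by
      refine (Finset.sum_eq_zero_iff_of_nonneg ?_).1 hkey
      intro v hv
      have := hull_le_half V hV u v (subset_convexHull ℝ _ (by exact_mod_cast hv))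
      have := hw0 v hv
      nlinarith
    have hvanish : ∀ v ∈ V, w v ≠ 0 → ⟪u, v⟫ = M := by
      intro v hv hwv
      have := hzero v hv
      have : M - ⟪u, v⟫ = 0 := by
        rcases mul_eq_zero.1 this with h | h
        · exact absurd h hwv
        · exact h
      linarith
    have hsumA : ∑ v ∈ A, w v = 1 := by
      rw [hA, Finset.sum_filter_of_ne, hw1]
      exact fun v hv hwv => hvanish v hv hwv
    have hxA : x = ∑ v ∈ A, w v • v := by
      rw [hxsum, hA, Finset.sum_filter_of_ne]
      intro v hv hwv
      apply hvanish v hv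
      intro h
      rw [h, zero_smul] at hwv
      exact hwv rfl
    have := Finset.centerMass_id_mem_convexHull A
      (fun v hv => hw0 v (Finset.mem_filter.1 hv).1) (by rw [hsumA]; norm_num)
    rw [Finset.centerMass_eq_of_sum_1 _ _ hsumA] at this
    simp only [id] at this
    rwa [← hxA] at this
  · intro x hx
    have hAV : (A : Set (Euc n)) ⊆ (V : Set (Euc n)) := by
      intro v hv; exact_mod_cast (Finset.mem_filter.1 (by exact_mod_cast hv)).1
    have hxP : x ∈ convexHull ℝ (V : Set (Euc n)) := convexHull_mono hAV hx
    have hxM : ⟪u, x⟫ = M := by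
      have : convexHull ℝ (A : Set (Euc n)) ⊆ {z | ⟪u, z⟫ = M} := by
        apply convexHull_min
        · intro v hv
          exact (Finset.mem_filter.1 (by exact_mod_cast hv)).2
        · exact convex_hyperplane (inner_isLinearMap u) M
      exact this hx
    exact ⟨hxP, fun y hy => by rw [hxM]; exact hull_le_half V hV u y hy⟩



variable {n : ℕ}

lemma grow (V : Finset (Euc n)) (hV : V.Nonempty) {u w y : Euc n} {cst : ℝ}
    (hw0 : w ≠ 0) (hwu : ⟪w, u⟫ = 0)
    (hwA : ∀ v ∈ V.filter (fun v => ⟪u, v⟫ = V.sup' hV fun v' => ⟪u, v'⟫), ⟪w, v⟫ = cst)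
    (hyu : ⟪u, y⟫ = V.sup' hV (fun v => ⟪u, v⟫))
    (hyw : ⟪w, y⟫ = cst)
    (hex : ∃ v ∈ V, cst < ⟪w, v⟫) :
    ∃ u' : Euc n, u' ≠ 0 ∧ ⟪u', y⟫ = V.sup' hV (fun v => ⟪u', v⟫) ∧
      (V.filter (fun v => ⟪u, v⟫ = V.sup' hV fun v' => ⟪u, v'⟫)).card
        < (V.filter (fun v => ⟪u', v⟫ = V.sup' hV fun v' => ⟪u', v'⟫)).card := by
  classical
  set M := V.sup' hV (fun v => ⟪u, v⟫) with hM
  set A := V.filter (fun v => ⟪u, v⟫ = M) with hA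
  set B := V.filter (fun v => cst < ⟪w, v⟫) with hB
  have hBne : B.Nonempty := by
    obtain ⟨v, hvV, hv⟩ := hex
    exact ⟨v, Finset.mem_filter.2 ⟨hvV, hv⟩⟩
  set t := B.inf' hBne (fun v => (M - ⟪u, v⟫) / (⟪w, v⟫ - cst)) with ht
  have hBprop : ∀ v ∈ B, cst < ⟪w, v⟫ := fun v hv => (Finset.mem_filter.1 hv).2
  have hBV : ∀ v ∈ B, v ∈ V := fun v hv => (Finset.mem_filter.1 hv).1
  have hBnA : ∀ v ∈ B, ⟪u, v⟫ < M := by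
    intro v hv
    have hle : ⟪u, v⟫ ≤ M := Finset.le_sup' (fun v => ⟪u, v⟫) (hBV v hv)
    rcases lt_or_eq_of_le hle with h | h
    · exact h
    · exfalso
      have : v ∈ A := Finset.mem_filter.2 ⟨hBV v hv, h⟩
      have := hwA v (by rwa [hA] at this)
      have := hBprop v hv
      linarith
  have htpos : 0 < t := by
    rw [ht, Finset.lt_inf'_iff]
    intro v hv
    exact div_pos (by linarith [hBnA v hv]) (by linarith [hBprop v hv])
  set u' := u + t • w with hu'
  have hval : ∀ v : Euc n, ⟪u', v⟫ = ⟪u, v⟫ + t * ⟪w, v⟫ := by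
    intro v
    rw [hu', inner_add_left, real_inner_smul_left]
  have hu'0 : u' ≠ 0 := by
    intro h
    have h1 : ⟪w, u'⟫ = 0 := by rw [h, inner_zero_right]
    rw [hu', inner_add_right, hwu, real_inner_smul_right, zero_add] at h1
    have hw2 : 0 < ⟪w, w⟫ := lt_of_le_of_ne real_inner_self_nonneg (Ne.symm (inner_self_ne_zero.2 hw0))
    nlinarith
  have hbound : ∀ v ∈ V, ⟪u', v⟫ ≤ M + t * cst := by
    intro v hvV
    rw [hval]
    rcases le_or_gt ⟪w, v⟫ cst with h | h
    · have h1 : ⟪u, v⟫ ≤ M := Finset.le_sup' (fun v => ⟪u, v⟫) hvV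
      nlinarith
    · have hvB : v ∈ B := Finset.mem_filter.2 ⟨hvV, h⟩
      have h1 : t ≤ (M - ⟪u, v⟫) / (⟪w, v⟫ - cst) := Finset.inf'_le _ hvB
      rw [le_div_iff₀ (by linarith)] at h1
      nlinarith
  obtain ⟨v₀, hv₀V, hv₀⟩ := Finset.exists_mem_eq_sup' hV (fun v => ⟪u, v⟫)
  have hv₀A : v₀ ∈ A := Finset.mem_filter.2 ⟨hv₀V, hv₀.symm⟩
  have hAval : ∀ v ∈ A, ⟪u', v⟫ = M + t * cst := by
    intro v hv
    rw [hval, (Finset.mem_filter.1 hv).2, hwA v (by rwa [hA] at hv)]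
  have hMnew : V.sup' hV (fun v => ⟪u', v⟫) = M + t * cst := by
    apply le_antisymm
    · exact Finset.sup'_le hV _ hbound
    · rw [← hAval v₀ hv₀A]
      exact Finset.le_sup' (fun v => ⟪u', v⟫) hv₀V
  obtain ⟨v₁, hv₁B, hv₁⟩ := Finset.exists_mem_eq_inf' hBne (fun v => (M - ⟪u, v⟫) / (⟪w, v⟫ - cst))
  have hv₁val : ⟪u', v₁⟫ = M + t * cst := by
    rw [hval]
    have hd : ⟪w, v₁⟫ - cst ≠ 0 := by have := hBprop v₁ hv₁B; linarith
    have : t * (⟪w, v₁⟫ - cst) = M - ⟪u, v₁⟫ := by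
      rw [ht, hv₁]
      exact div_mul_cancel₀ _ hd
    nlinarith [this]
  have hv₁nA : v₁ ∉ A := by
    intro h
    have := hwA v₁ (by rwa [hA] at h)
    have := hBprop v₁ hv₁B
    linarith
  refine ⟨u', hu'0, ?_, ?_⟩
  · rw [hval, hyu, hyw, hMnew]
  · apply Finset.card_lt_card
    constructor
    · intro v hv
      refine Finset.mem_filter.2 ⟨(Finset.mem_filter.1 hv).1, ?_⟩
      rw [hMnew]
      exact hAval v hv
    · intro hsub
      apply hv₁nA
      have hv₁mem : v₁ ∈ V.filter (fun v => ⟪u', v⟫ = V.sup' hV fun v' => ⟪u', v'⟫) :=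
        Finset.mem_filter.2 ⟨hBV v₁ hv₁B, by rw [hMnew]; exact hv₁val⟩
      exact hsub hv₁mem

lemma vspan_filter_le_orth (V : Finset (Euc n)) (hV : V.Nonempty) (u : Euc n) :
    vectorSpan ℝ ((V.filter (fun v => ⟪u, v⟫ = V.sup' hV fun v' => ⟪u, v'⟫) : Finset (Euc n))
      : Set (Euc n)) ≤ (ℝ ∙ u)ᗮ := by
  rw [vectorSpan_def, Submodule.span_le]
  rintro z hz
  rw [Set.mem_vsub] at hz
  obtain ⟨a, ha, b, hb, rfl⟩ := hz
  rw [SetLike.mem_coe, Submodule.mem_orthogonal]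
  intro x hx
  obtain ⟨c, rfl⟩ := Submodule.mem_span_singleton.1 hx
  have ha' := (Finset.mem_filter.1 (Finset.mem_coe.1 ha)).2
  have hb' := (Finset.mem_filter.1 (Finset.mem_coe.1 hb)).2
  have : a -ᵥ b = a - b := rfl
  rw [this, real_inner_smul_left, inner_sub_right, ha', hb']
  ring

lemma finrank_orth_singleton {u : Euc n} (hu : u ≠ 0) :
    Module.finrank ℝ ((ℝ ∙ u)ᗮ : Submodule ℝ (Euc n)) = n - 1 := by
  have h1 := Submodule.finrank_add_finrank_orthogonal (K := (ℝ ∙ u : Submodule ℝ (Euc n)))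
  rw [finrank_span_singleton hu] at h1
  have h2 : Module.finrank ℝ (Euc n) = n := finrank_euclideanSpace_fin
  omega

lemma vectorSpan_V_top (V : Finset (Euc n)) {P : Set (Euc n)}
    (hP : P = convexHull ℝ (V : Set (Euc n))) {r : ℝ} (hr : 0 < r)
    (hball : closedBall (0 : Euc n) r ⊆ P) :
    vectorSpan ℝ (V : Set (Euc n)) = ⊤ := by
  have hPspan : vectorSpan ℝ P = vectorSpan ℝ (V : Set (Euc n)) := by
    rw [hP, ← direction_affineSpan, affineSpan_convexHull, direction_affineSpan]
  rw [← hPspan]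
  apply eq_top_iff.2
  intro z _
  by_cases hz : z = 0
  · rw [hz]; exact Submodule.zero_mem _
  · have hzn : (0:ℝ) < ‖z‖ := norm_pos_iff.2 hz
    set s : Euc n := (r / ‖z‖) • z with hs
    have hsP : s ∈ P := by
      apply hball
      rw [mem_closedBall, dist_zero_right, hs, norm_smul, Real.norm_eq_abs,
        abs_of_pos (div_pos hr hzn), div_mul_cancel₀ _ hzn.ne']
    have h0P : (0 : Euc n) ∈ P := hball (by simp [hr.le])
    have hmem : s - 0 ∈ vectorSpan ℝ P := vsub_mem_vectorSpan ℝ hsP h0P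
    rw [sub_zero] at hmem
    have : z = (‖z‖ / r) • s := by
      rw [hs, smul_smul, div_mul_div_comm, mul_comm, div_self (by positivity), one_smul]
    rw [this]
    exact Submodule.smul_mem _ _ hmem

lemma mem_face_of_max (V : Finset (Euc n)) (hV : V.Nonempty) {u y : Euc n}
    (hy : y ∈ convexHull ℝ (V : Set (Euc n)))
    (hyu : ⟪u, y⟫ = V.sup' hV (fun v => ⟪u, v⟫)) :
    y ∈ convexHull ℝ ((V.filter (fun v => ⟪u, v⟫ = V.sup' hV fun v' => ⟪u, v'⟫)
        : Finset (Euc n)) : Set (Euc n)) := by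
  rw [← face_eq V hV u]
  exact ⟨hy, fun z hz => by rw [hyu]; exact hull_le_half V hV u z hz⟩

lemma exists_facet (hn : 2 ≤ n) (V : Finset (Euc n)) {P : Set (Euc n)}
    (hP : P = convexHull ℝ (V : Set (Euc n))) {r : ℝ} (hr : 0 < r)
    (hball : closedBall (0 : Euc n) r ⊆ P) {y : Euc n} (hy : y ∈ P)
    (hyi : y ∉ interior P) :
    ∃ F : Set (Euc n), IsFacet P F ∧ y ∈ F := by
  classical
  have h0P : (0 : Euc n) ∈ P := hball (by simp [hr.le])
  have hV : V.Nonempty := by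
    rcases Finset.eq_empty_or_nonempty V with h | h
    · exfalso; rw [h] at hP; simp at hP; rw [hP] at h0P; exact h0P
    · exact h
  have hconv : Convex ℝ P := hP ▸ convex_convexHull ℝ _
  have h0int : (0 : Euc n) ∈ interior P :=
    interior_maximal (le_trans ball_subset_closedBall hball) isOpen_ball (mem_ball_self hr)
  have hVtop : vectorSpan ℝ (V : Set (Euc n)) = ⊤ := vectorSpan_V_top V hP hr hball
  -- supporting functional at y
  obtain ⟨f, hf⟩ := geometric_hahn_banach_open_point (hconv.interior) isOpen_interior hyi
  have hfy_pos : 0 < f y := by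
    have := hf 0 h0int
    rwa [map_zero] at this
  have hfP : ∀ v ∈ P, f v ≤ f y := by
    intro v hv
    by_contra hlt
    push_neg at hlt
    have hfv : 0 < f v := lt_trans hfy_pos hlt
    set ε : ℝ := (f v - f y) / (2 * f v) with hε
    have hε0 : 0 < ε := by apply div_pos <;> nlinarith
    have hε1 : ε ≤ 1 := by rw [hε, div_le_one (by nlinarith)]; nlinarith
    have hz : ε • (0 : Euc n) + (1 - ε) • v ∈ interior P :=
      hconv.combo_interior_closure_mem_interior h0int (subset_closure hv) hε0
        (by linarith) (by ring)
    rw [show ε • (0 : Euc n) + (1 - ε) • v = (1 - ε) • v by simp] at hz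
    have hfz := hf _ hz
    rw [f.map_smul, smul_eq_mul] at hfz
    have hεv : ε * f v = (f v - f y) / 2 := by
      rw [hε]
      field_simp
    nlinarith
  set u₀ := (InnerProductSpace.toDual ℝ (Euc n)).symm f with hu₀def
  have hu₀app : ∀ z : Euc n, ⟪u₀, z⟫ = f z := fun z =>
    InnerProductSpace.toDual_symm_apply
  have hu₀ : u₀ ≠ 0 := by
    intro h
    have := hu₀app y
    rw [h, inner_zero_left] at this
    linarith
  have hyM : ⟪u₀, y⟫ = V.sup' hV (fun v => ⟪u₀, v⟫) := by
    apply le_antisymm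
    · rw [hP] at hy
      exact hull_le_half V hV u₀ y hy
    · apply Finset.sup'_le
      intro v hvV
      rw [hu₀app, hu₀app]
      exact hfP v (hP ▸ subset_convexHull ℝ _ (Finset.mem_coe.2 hvV))
  suffices H : ∀ k (u : Euc n), u ≠ 0 → ⟪u, y⟫ = V.sup' hV (fun v => ⟪u, v⟫) →
      V.card - (V.filter fun v => ⟪u, v⟫ = V.sup' hV fun v' => ⟪u, v'⟫).card ≤ k →
      ∃ F, IsFacet P F ∧ y ∈ F by
    exact H V.card u₀ hu₀ hyM (by omega)
  intro k
  induction k with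
  | zero =>
    intro u hu hyu hk
    exfalso
    set A := V.filter fun v => ⟪u, v⟫ = V.sup' hV fun v' => ⟪u, v'⟫ with hA
    have hAV : A = V := Finset.eq_of_subset_of_card_le (Finset.filter_subset _ _) (by omega)
    have h1 : vectorSpan ℝ (V : Set (Euc n)) ≤ (ℝ ∙ u)ᗮ := by
      rw [← hAV]; exact vspan_filter_le_orth V hV u
    rw [hVtop] at h1
    have h2 : Module.finrank ℝ ((ℝ ∙ u)ᗮ : Submodule ℝ (Euc n)) = n - 1 :=
      finrank_orth_singleton hu
    have h3 : Module.finrank ℝ (Euc n) ≤ Module.finrank ℝ ((ℝ ∙ u)ᗮ : Submodule ℝ (Euc n)) := by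
      calc Module.finrank ℝ (Euc n) = Module.finrank ℝ (⊤ : Submodule ℝ (Euc n)) :=
            (finrank_top ℝ _).symm
        _ ≤ _ := Submodule.finrank_mono h1
    have h4 : Module.finrank ℝ (Euc n) = n := finrank_euclideanSpace_fin
    omega
  | succ k ih =>
    intro u hu hyu hk
    set A := V.filter fun v => ⟪u, v⟫ = V.sup' hV fun v' => ⟪u, v'⟫ with hA
    by_cases hdim : Module.finrank ℝ (vectorSpan ℝ (A : Set (Euc n))) = n - 1
    · -- construct the facet
      have hyV : y ∈ convexHull ℝ (V : Set (Euc n)) := by rw [← hP]; exact hy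
      have hyF : y ∈ convexHull ℝ (A : Set (Euc n)) := mem_face_of_max V hV hyV hyu
      refine ⟨convexHull ℝ (A : Set (Euc n)), ⟨⟨y, hyF⟩, ?_, ?_⟩, hyF⟩
      · intro _
        refine ⟨innerSL ℝ u, ?_⟩
        rw [hP]
        simp only [innerSL_apply_apply]
        exact (face_eq V hV u).symm
      · rw [← direction_affineSpan, affineSpan_convexHull, direction_affineSpan]
        exact hdim
    · -- grow the face
      have hAle : vectorSpan ℝ (A : Set (Euc n)) ≤ (ℝ ∙ u)ᗮ := vspan_filter_le_orth V hV u
      have hdle : Module.finrank ℝ (vectorSpan ℝ (A : Set (Euc n))) ≤ n - 1 := by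
        calc Module.finrank ℝ (vectorSpan ℝ (A : Set (Euc n)))
            ≤ Module.finrank ℝ ((ℝ ∙ u)ᗮ : Submodule ℝ (Euc n)) := Submodule.finrank_mono hAle
          _ = n - 1 := finrank_orth_singleton hu
      set W : Submodule ℝ (Euc n) := vectorSpan ℝ (A : Set (Euc n)) ⊔ (ℝ ∙ u) with hW
      have hne : Module.finrank ℝ (vectorSpan ℝ (A : Set (Euc n))) ≠ n - 1 := hdim
      have hWrank : Module.finrank ℝ W ≤ n - 1 := by
        have h1 := Submodule.finrank_sup_add_finrank_inf_eq
          (vectorSpan ℝ (A : Set (Euc n))) (ℝ ∙ u)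
        rw [← hW] at h1
        have h2 : Module.finrank ℝ (ℝ ∙ u : Submodule ℝ (Euc n)) = 1 :=
          finrank_span_singleton hu
        omega
      have hWorth : Module.finrank ℝ (Wᗮ : Submodule ℝ (Euc n)) ≠ 0 := by
        have h1 := Submodule.finrank_add_finrank_orthogonal (K := W)
        have h4 : Module.finrank ℝ (Euc n) = n := finrank_euclideanSpace_fin
        omega
      obtain ⟨w, hwW, hw0⟩ : ∃ w ∈ Wᗮ, w ≠ 0 := by
        by_contra hc
        push_neg at hc
        have : Wᗮ = ⊥ := by
          apply (Submodule.eq_bot_iff _).2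
          intro x hx
          by_contra hx0
          exact hx0 (hc x hx)
        rw [this] at hWorth
        simp at hWorth
      have hwu : ⟪w, u⟫ = 0 := by
        have huW : u ∈ W := le_sup_right (α := Submodule ℝ (Euc n))
          (Submodule.mem_span_singleton_self u)
        have := (Submodule.mem_orthogonal W w).1 hwW u huW
        rw [← this, real_inner_comm]
      obtain ⟨v₀, hv₀V, hv₀⟩ := Finset.exists_mem_eq_sup' hV (fun v => ⟪u, v⟫)
      have hv₀A : v₀ ∈ A := Finset.mem_filter.2 ⟨hv₀V, hv₀.symm⟩
      set cst := ⟪w, v₀⟫ with hcst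
      have hwA : ∀ v ∈ A, ⟪w, v⟫ = cst := by
        intro v hv
        have hmem : v -ᵥ v₀ ∈ vectorSpan ℝ (A : Set (Euc n)) :=
          vsub_mem_vectorSpan ℝ (Finset.mem_coe.2 hv) (Finset.mem_coe.2 hv₀A)
        have hmemW : v - v₀ ∈ W := le_sup_left (α := Submodule ℝ (Euc n)) hmem
        have := (Submodule.mem_orthogonal W w).1 hwW _ hmemW
        rw [real_inner_comm] at this
        rw [inner_sub_right] at this
        linarith
      have hyw : ⟪w, y⟫ = cst := by
        have hyA : y ∈ convexHull ℝ (A : Set (Euc n)) :=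
          mem_face_of_max V hV (hP ▸ hy) hyu
        have hsub : convexHull ℝ (A : Set (Euc n)) ⊆ {z | ⟪w, z⟫ = cst} :=
          convexHull_min (fun v hv => hwA v (Finset.mem_coe.1 hv))
            (convex_hyperplane (inner_isLinearMap w) cst)
        exact hsub hyA
      by_cases hex : ∃ v ∈ V, ⟪w, v⟫ ≠ cst
      · obtain ⟨v₁, hv₁V, hv₁⟩ := hex
        have hgrow : ∃ u' : Euc n, u' ≠ 0 ∧ ⟪u', y⟫ = V.sup' hV (fun v => ⟪u', v⟫) ∧
            A.card < (V.filter (fun v => ⟪u', v⟫ = V.sup' hV fun v' => ⟪u', v'⟫)).card := by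
          rcases lt_or_gt_of_ne hv₁ with hlt | hgt
          · apply grow V hV (neg_ne_zero.2 hw0) (by rw [inner_neg_left, hwu, neg_zero])
              (fun v hv => by rw [inner_neg_left, hwA v hv]) hyu
              (by rw [inner_neg_left, hyw])
              ⟨v₁, hv₁V, by rw [inner_neg_left]; linarith⟩
          · exact grow V hV hw0 hwu hwA hyu hyw ⟨v₁, hv₁V, hgt⟩
        obtain ⟨u', hu'0, hyu', hcard⟩ := hgrow
        apply ih u' hu'0 hyu'
        have hle := Finset.card_filter_le V (fun v => ⟪u', v⟫ = V.sup' hV fun v' => ⟪u', v'⟫)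
        omega
      · exfalso
        push_neg at hex
        have hPhyp : P ⊆ {z | ⟪w, z⟫ = cst} := by
          rw [hP]
          exact convexHull_min (fun v hv => hex v (Finset.mem_coe.1 hv))
            (convex_hyperplane (inner_isLinearMap w) cst)
        have h0 : (0:ℝ) = cst := by
          have := hPhyp h0P
          rwa [Set.mem_setOf_eq, inner_zero_right] at this
        have hwn : (0:ℝ) < ‖w‖ := norm_pos_iff.2 hw0
        have hsP : (r / ‖w‖) • w ∈ P := by
          apply hball
          rw [mem_closedBall, dist_zero_right, norm_smul, Real.norm_eq_abs,
            abs_of_pos (div_pos hr hwn), div_mul_cancel₀ _ hwn.ne']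
        have h2 := hPhyp hsP
        rw [Set.mem_setOf_eq, real_inner_smul_right, real_inner_self_eq_norm_sq, ← h0] at h2
        have h3 : r / ‖w‖ * ‖w‖ ^ 2 = r * ‖w‖ := by
          field_simp
        rw [h3] at h2
        nlinarith


lemma radial_boundary {P : Set (Euc n)} (hclosed : IsClosed P) (hP1 : P ⊆ closedBall 0 1)
    {r : ℝ} (hr : 0 < r) (hball : closedBall (0 : Euc n) r ⊆ P) {θ : Euc n} (hθ : ‖θ‖ = 1) :
    ∃ t : ℝ, r ≤ t ∧ t ≤ 1 ∧ t • θ ∈ P ∧ t • θ ∉ interior P := by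
  set S : Set ℝ := {t : ℝ | t • θ ∈ P} with hS
  have hmemr : r ∈ S := by
    show r • θ ∈ P
    apply hball
    rw [mem_closedBall, dist_zero_right, norm_smul, Real.norm_eq_abs, hθ, mul_one,
      abs_of_pos hr]
  have hub : ∀ t ∈ S, t ≤ 1 := by
    intro t ht
    have := hP1 ht
    rw [mem_closedBall, dist_zero_right, norm_smul, Real.norm_eq_abs, hθ, mul_one] at this
    exact le_trans (le_abs_self t) this
  have hbdd : BddAbove S := ⟨1, hub⟩
  have hSc : IsClosed S := hclosed.preimage (by continuity)
  have hne : S.Nonempty := ⟨r, hmemr⟩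
  set t₀ := sSup S with ht₀
  have ht₀S : t₀ ∈ S := hSc.csSup_mem hne hbdd
  refine ⟨t₀, le_csSup hbdd hmemr, csSup_le hne hub, ht₀S, ?_⟩
  intro hint
  obtain ⟨ε, hε, hball'⟩ := Metric.isOpen_iff.1 isOpen_interior _ hint
  have hmem2 : (t₀ + ε/2) • θ ∈ P := by
    apply interior_subset
    apply hball'
    rw [mem_ball, dist_eq_norm, ← sub_smul, add_sub_cancel_left, norm_smul,
      Real.norm_eq_abs, hθ, mul_one, abs_of_pos (by linarith)]
    linarith
  have : t₀ + ε/2 ≤ t₀ := le_csSup hbdd hmem2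
  linarith

lemma exists_extreme_max {P : Set (Euc n)} (hcomp : IsCompact P) (hconv : Convex ℝ P)
    (hne : P.Nonempty) (θ : Euc n) :
    ∃ w ∈ P.extremePoints ℝ, ∀ z ∈ P, ⟪θ, z⟫ ≤ ⟪θ, w⟫ := by
  obtain ⟨x, hxP, hxmax⟩ := hcomp.exists_isMaxOn hne
    ((continuous_const.inner continuous_id : Continuous fun z : Euc n => ⟪θ, z⟫).continuousOn)
  set G := {x ∈ P | ∀ z ∈ P, ⟪θ, z⟫ ≤ ⟪θ, x⟫} with hG
  have hexp : IsExposed ℝ P G := by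
    intro _
    exact ⟨innerSL ℝ θ, by simp only [hG, innerSL_apply_apply]⟩
  have hGne : G.Nonempty := ⟨x, hxP, fun z hz => hxmax hz⟩
  have hGcomp : IsCompact G := hcomp.of_isClosed_subset (hexp.isClosed hcomp.isClosed)
    (fun z hz => hz.1)
  obtain ⟨w, hw⟩ := hGcomp.extremePoints_nonempty hGne
  have hwP : w ∈ P.extremePoints ℝ :=
    (hexp.isExtreme).extremePoints_subset_extremePoints hw
  exact ⟨w, hwP, (hw.1 : w ∈ G).2⟩

end ManyFaces

open ManyFaces

/-- If `P ⊆ ℝⁿ` (`n ≥ 3`) is a polytope with `r·B₂ⁿ ⊆ P ⊆ B₂ⁿ` for some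
`1/√(n−1) ≤ r ≤ 1`, then both the number of facets and the number of vertices of `P` are at
least `(1/(2(1−r)))^{(n−1)/2}` (stated in `ℝ≥0∞`, so that for `r = 1` the right-hand side
is `+∞` and the statement asserts the situation is impossible). -/
theorem many_faces_of_polytope_close_to_ball {n : ℕ} (hn : 3 ≤ n)
    (V : Finset (Euc n)) (P : Set (Euc n)) (hP : P = convexHull ℝ (V : Set (Euc n)))
    (r : ℝ) (hr1 : 1 / Real.sqrt ((n : ℝ) - 1) ≤ r) (hr2 : r ≤ 1)
    (hball : closedBall (0 : Euc n) r ⊆ P) (hP1 : P ⊆ closedBall (0 : Euc n) 1) :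
    (ENNReal.ofReal (2 * (1 - r)))⁻¹ ^ (((n : ℝ) - 1) / 2) ≤
      (min {F : Set (Euc n) | IsFacet P F}.ncard (P.extremePoints ℝ).ncard : ℝ≥0∞) := by

  classical
  obtain ⟨m, rfl⟩ : ∃ m, n = m + 1 := ⟨n - 1, by omega⟩
  have hm : 2 ≤ m := by omega
  have hr0 : 0 < r := by
    have h1 : (0:ℝ) < Real.sqrt (((m+1 : ℕ) : ℝ) - 1) := by
      apply Real.sqrt_pos.2
      push_cast
      have : (2:ℝ) ≤ (m:ℝ) := by exact_mod_cast hm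
      linarith
    exact lt_of_lt_of_le (div_pos one_pos h1) hr1
  set ρ := Real.sqrt (2 * (1 - r)) with hρ
  have hρ0 : 0 ≤ ρ := Real.sqrt_nonneg _
  have h2r : 0 ≤ 2 * (1 - r) := by linarith
  have hρsq : ρ ^ 2 = 2 * (1 - r) := Real.sq_sqrt h2r
  have hcomp : IsCompact P := hP ▸ V.finite_toSet.isCompact_convexHull ℝ
  have hPclosed : IsClosed P := hcomp.isClosed
  have hconv : Convex ℝ P := hP ▸ convex_convexHull ℝ _
  have h0P : (0 : Euc (m+1)) ∈ P := hball (by simp [hr0.le])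
  have hPne : P.Nonempty := ⟨0, h0P⟩
  have hVne : V.Nonempty := by
    rcases Finset.eq_empty_or_nonempty V with h | h
    · exfalso; rw [h] at hP; simp at hP; rw [hP] at h0P; exact h0P
    · exact h
  have hWfin : (P.extremePoints ℝ).Finite := by
    apply V.finite_toSet.subset
    rw [hP]
    exact extremePoints_convexHull_subset
  have hVtop : vectorSpan ℝ (V : Set (Euc (m+1))) = ⊤ := vectorSpan_V_top V hP hr0 hball
  -- choose facet normals
  have hfacetrep : ∀ F : Set (Euc (m+1)), IsFacet P F → ∃ u : Euc (m+1), u ≠ 0 ∧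
      F = {x ∈ P | ∀ z ∈ P, ⟪u, z⟫ ≤ ⟪u, x⟫} := by
    intro F hF
    obtain ⟨l, hl⟩ := hF.2.1 hF.1
    refine ⟨(InnerProductSpace.toDual ℝ (Euc (m+1))).symm l, ?_, ?_⟩
    · intro h0
      have hlz : ∀ z : Euc (m+1), l z = 0 := by
        intro z
        rw [← InnerProductSpace.toDual_symm_apply (y := l) (x := z), h0, inner_zero_left]
      have hFP : F = P := by
        rw [hl]
        ext z
        simp [hlz]
      have h1 := hF.2.2
      rw [hFP] at h1
      have h2 : vectorSpan ℝ P = ⊤ := by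
        rw [hP, ← direction_affineSpan, affineSpan_convexHull, direction_affineSpan]
        exact hVtop
      rw [h2] at h1
      rw [finrank_top] at h1
      rw [finrank_euclideanSpace_fin] at h1
      omega
    · rw [hl]
      ext z
      simp only [Set.mem_setOf_eq, InnerProductSpace.toDual_symm_apply]
  choose! uF huF0 huFrep using hfacetrep
  have hFfin : {F : Set (Euc (m+1)) | IsFacet P F}.Finite := by
    apply Set.Finite.subset (Set.Finite.image
      (fun A : Finset (Euc (m+1)) => convexHull ℝ (A : Set (Euc (m+1))))
      (V.powerset.finite_toSet))
    intro F hF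
    refine ⟨V.filter (fun v => ⟪uF F, v⟫ = V.sup' hVne fun v' => ⟪uF F, v'⟫),
      Finset.mem_coe.2 (Finset.mem_powerset.2 (Finset.filter_subset _ _)), ?_⟩
    conv_rhs => rw [huFrep F hF, hP]
    exact (face_eq V hVne (uF F)).symm
  -- vertex covering
  have hcovW : closedBall (0 : Euc m) 1 ⊆
      ⋃ w ∈ hWfin.toFinset, closedBall (proj ((‖w‖ : ℝ)⁻¹ • w)) ρ := by
    intro x hx
    rw [mem_closedBall_zero_iff] at hx
    obtain ⟨θ, hθ1, hθproj⟩ := exists_lift x hx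
    obtain ⟨w, hwext, hwmax⟩ := exists_extreme_max hcomp hconv hPne θ
    have hrθ : r • θ ∈ P := hball (by
      rw [mem_closedBall_zero_iff, norm_smul, Real.norm_eq_abs, hθ1, mul_one, abs_of_pos hr0])
    have hrw : r ≤ ⟪θ, w⟫ := by
      have := hwmax _ hrθ
      rwa [real_inner_smul_right, real_inner_self_eq_norm_sq, hθ1, one_pow, mul_one] at this
    have hw0 : w ≠ 0 := by
      rintro rfl
      rw [inner_zero_right] at hrw
      linarith
    have hwP : w ∈ P := hwext.1
    have hw1 : ‖w‖ ≤ 1 := by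
      have := hP1 hwP
      rwa [mem_closedBall_zero_iff] at this
    have hwpos : 0 < ‖w‖ := norm_pos_iff.2 hw0
    have hw'1 : ‖(‖w‖ : ℝ)⁻¹ • w‖ = 1 := norm_smul_inv_norm hw0
    have hinv : 1 ≤ ‖w‖⁻¹ := (one_le_inv₀ hwpos).2 hw1
    have hw'r : r ≤ ⟪(‖w‖ : ℝ)⁻¹ • w, θ⟫ := by
      rw [real_inner_smul_left, real_inner_comm]
      nlinarith
    have hdist := cap_dist hw'1 hθ1 hw'r
    refine Set.mem_iUnion₂.2 ⟨w, hWfin.mem_toFinset.2 hwext, ?_⟩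
    rw [mem_closedBall, ← hθproj]
    calc dist (proj θ) (proj ((‖w‖ : ℝ)⁻¹ • w)) ≤ dist θ ((‖w‖ : ℝ)⁻¹ • w) := proj_dist _ _
      _ = ‖(‖w‖ : ℝ)⁻¹ • w - θ‖ := by rw [dist_eq_norm, norm_sub_rev]
      _ ≤ ρ := hdist
  -- facet covering
  have hcovF : closedBall (0 : Euc m) 1 ⊆
      ⋃ F ∈ hFfin.toFinset, closedBall (proj ((‖uF F‖ : ℝ)⁻¹ • uF F)) ρ := by
    intro x hx
    rw [mem_closedBall_zero_iff] at hx
    obtain ⟨θ, hθ1, hθproj⟩ := exists_lift x hx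
    obtain ⟨t₀, hrt, ht1, htP, htni⟩ := radial_boundary hPclosed hP1 hr0 hball hθ1
    obtain ⟨F, hF, hyF⟩ := exists_facet (by omega) V hP hr0 hball htP htni
    have hu0 := huF0 F hF
    have hupos : 0 < ‖uF F‖ := norm_pos_iff.2 hu0
    have hymax : ∀ z ∈ P, ⟪uF F, z⟫ ≤ ⟪uF F, t₀ • θ⟫ := by
      have h := hyF
      rw [huFrep F hF] at h
      exact h.2
    have hu'1 : ‖(‖uF F‖ : ℝ)⁻¹ • uF F‖ = 1 := norm_smul_inv_norm hu0
    have hzP : r • ((‖uF F‖ : ℝ)⁻¹ • uF F) ∈ P := hball (by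
      rw [mem_closedBall_zero_iff, norm_smul, Real.norm_eq_abs, hu'1, mul_one, abs_of_pos hr0])
    have h1 : r * ‖uF F‖ ≤ ⟪uF F, t₀ • θ⟫ := by
      have h := hymax _ hzP
      rw [real_inner_smul_right, real_inner_smul_right, real_inner_self_eq_norm_sq] at h
      have he : r * ((‖uF F‖)⁻¹ * ‖uF F‖ ^ 2) = r * ‖uF F‖ := by
        field_simp
      rwa [he] at h
    have ht0pos : 0 < t₀ := lt_of_lt_of_le hr0 hrt
    have h2 : r ≤ t₀ * ⟪(‖uF F‖ : ℝ)⁻¹ • uF F, θ⟫ := by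
      have hval : ⟪(‖uF F‖ : ℝ)⁻¹ • uF F, t₀ • θ⟫
          = t₀ * ⟪(‖uF F‖ : ℝ)⁻¹ • uF F, θ⟫ := real_inner_smul_right _ _ _
      have h3 : ⟪(‖uF F‖ : ℝ)⁻¹ • uF F, t₀ • θ⟫
          = (‖uF F‖)⁻¹ * ⟪uF F, t₀ • θ⟫ := real_inner_smul_left _ _ _
      have h4 := mul_le_mul_of_nonneg_left h1 (inv_pos.2 hupos).le
      rw [← h3, hval] at h4
      have h5 : (‖uF F‖)⁻¹ * (r * ‖uF F‖) = r := by field_simp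
      linarith
    have hqpos : 0 < ⟪(‖uF F‖ : ℝ)⁻¹ • uF F, θ⟫ := by
      rcases mul_pos_iff.1 (lt_of_lt_of_le hr0 h2) with ⟨_, h⟩ | ⟨h, _⟩
      · exact h
      · linarith
    have hq : r ≤ ⟪(‖uF F‖ : ℝ)⁻¹ • uF F, θ⟫ := by
      have := mul_le_of_le_one_left hqpos.le ht1
      linarith
    have hdist := cap_dist hu'1 hθ1 hq
    refine Set.mem_iUnion₂.2 ⟨F, hFfin.mem_toFinset.2 hF, ?_⟩
    rw [mem_closedBall, ← hθproj]
    calc dist (proj θ) (proj ((‖uF F‖ : ℝ)⁻¹ • uF F))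
        ≤ dist θ ((‖uF F‖ : ℝ)⁻¹ • uF F) := proj_dist _ _
      _ = ‖(‖uF F‖ : ℝ)⁻¹ • uF F - θ‖ := by rw [dist_eq_norm, norm_sub_rev]
      _ ≤ ρ := hdist
  have hcount1 := counting (m := m) (by omega) hFfin.toFinset
    (fun F => proj ((‖uF F‖ : ℝ)⁻¹ • uF F)) hρ0 hcovF
  have hcount2 := counting (m := m) (by omega) hWfin.toFinset
    (fun w => proj ((‖w‖ : ℝ)⁻¹ • w)) hρ0 hcovW
  have hexp : ((((m+1) : ℕ) : ℝ) - 1) / 2 = (m : ℝ) / 2 := by push_cast; ring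
  rw [hexp, ← hρsq]
  have hc1 : {F : Set (Euc (m+1)) | IsFacet P F}.ncard = hFfin.toFinset.card :=
    Set.ncard_eq_toFinset_card _ hFfin
  have hc2 : (P.extremePoints ℝ).ncard = hWfin.toFinset.card :=
    Set.ncard_eq_toFinset_card _ hWfin
  refine le_min ?_ ?_
  · rw [hc1]
    exact hcount1
  · rw [hc2]
    exact hcount2
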